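/- Sylvester's identity: let A be an n×n matrix over a commutative ring and m < n. Define the (n−m)×(n−m) matrix B by b_{ij} = [1,...,m,m+i | 1,...,m,m+j]_A. Then det(B) = det(A) · ([1,...,m | 1,...,m]_A)^{n−m−1}. -/

import Mathlib

open Matrix

/-- A real matrix is totally nonnegative if every minor is nonnegative. -/
def TotNonneg {m n : ℕ} (A : Matrix (Fin m) (Fin n) ℝ) : Prop :=
  ∀ (s : ℕ) (f : Fin s → Fin m) (g : Fin s → Fin n),
    StrictMono f → StrictMono g → 0 ≤ (A.submatrix f g).det

/-- The class `M_{r,c}`. -/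
def InM {F : Type} [Field F] {m n t : ℕ} (A : Matrix (Fin m) (Fin n) F)
    (r : Fin t → Fin m) (c : Fin t → Fin n) : Prop :=
  A.rank = t ∧
  (∀ (s : ℕ) (hs : s ≤ t),
    (A.submatrix (fun k => r (Fin.castLE hs k)) (fun k => c (Fin.castLE hs k))).det ≠ 0) ∧
  (∀ (s : ℕ) (hs : s ≤ t) (f : Fin s → Fin m) (g : Fin s → Fin n),
    StrictMono f → StrictMono g →
    (¬ (∀ k, r (Fin.castLE hs k) ≤ f k) ∨ ¬ (∀ k, c (Fin.castLE hs k) ≤ g k)) →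
    (A.submatrix f g).det = 0)

/-- The class `L_r`. -/
def InL {F : Type} [Field F] {m t : ℕ} (L : Matrix (Fin m) (Fin t) F)
    (r : Fin t → Fin m) : Prop :=
  ∀ j, L (r j) j ≠ 0 ∧ ∀ i, i < r j → L i j = 0

/-- The class `L_r^*`. -/
def InLstar {F : Type} [Field F] {m t : ℕ} (L : Matrix (Fin m) (Fin t) F)
    (r : Fin t → Fin m) : Prop :=
  ∀ j, L (r j) j = 1 ∧ ∀ i, i < r j → L i j = 0

/-- The class `U_c`. -/
def InU {F : Type} [Field F] {t n : ℕ} (U : Matrix (Fin t) (Fin n) F)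
    (c : Fin t → Fin n) : Prop :=
  ∀ i, U i (c i) ≠ 0 ∧ ∀ j, j < c i → U i j = 0


lemma sylvester_field {F : Type} [Field F] {n m : ℕ} (hm : m < n)
    (A : Matrix (Fin n) (Fin n) F)
    (hP : (A.submatrix (Fin.castLE hm.le) (Fin.castLE hm.le)).det ≠ 0)
    (B : Matrix (Fin (n - m)) (Fin (n - m)) F)
    (hB : ∀ i j, B i j =
      (A.submatrix
        (Fin.snoc (fun k : Fin m => Fin.castLE hm.le k)
          (⟨m + i.val, Nat.add_lt_of_lt_sub' i.isLt⟩ : Fin n))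
        (Fin.snoc (fun k : Fin m => Fin.castLE hm.le k)
          (⟨m + j.val, Nat.add_lt_of_lt_sub' j.isLt⟩ : Fin n))).det) :
    B.det = A.det * ((A.submatrix (Fin.castLE hm.le) (Fin.castLE hm.le)).det) ^ (n - m - 1) := by
  set e : Fin m ⊕ Fin (n - m) ≃ Fin n :=
    finSumFinEquiv.trans (finCongr (by omega)) with he
  set M := A.submatrix e e with hM
  have heinl : ∀ k : Fin m, e (Sum.inl k) = Fin.castLE hm.le k := by
    intro k; apply Fin.ext; simp [he]
  have heinr : ∀ i : Fin (n - m), e (Sum.inr i) =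
      (⟨m + i.val, Nat.add_lt_of_lt_sub' i.isLt⟩ : Fin n) := by
    intro i; apply Fin.ext; simp [he]
  set P := M.toBlocks₁₁ with hPdef
  have hPeq : P = A.submatrix (Fin.castLE hm.le) (Fin.castLE hm.le) := by
    ext k l
    simp [hPdef, hM, Matrix.toBlocks₁₁, heinl]
  have hP' : P.det ≠ 0 := by rw [hPeq]; exact hP
  haveI : Invertible P := P.invertibleOfIsUnitDet (isUnit_iff_ne_zero.2 hP')
  set S : Matrix (Fin (n - m)) (Fin (n - m)) F :=
    M.toBlocks₂₂ - M.toBlocks₂₁ * ⅟P * M.toBlocks₁₂ with hSdef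
  have hdetA : A.det = P.det * S.det := by
    have h1 : (A.submatrix e e).det = A.det := Matrix.det_submatrix_equiv_self e A
    rw [← h1, show A.submatrix ⇑e ⇑e = M from rfl, ← Matrix.fromBlocks_toBlocks M,
      Matrix.det_fromBlocks₁₁]
  have hBentry : ∀ i j, B i j = P.det * S i j := by
    intro i j
    rw [hB i j]
    set f : Fin (m + 1) → Fin n := Fin.snoc (fun k : Fin m => Fin.castLE hm.le k)
      (⟨m + i.val, Nat.add_lt_of_lt_sub' i.isLt⟩ : Fin n) with hf
    set g : Fin (m + 1) → Fin n := Fin.snoc (fun k : Fin m => Fin.castLE hm.le k)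
      (⟨m + j.val, Nat.add_lt_of_lt_sub' j.isLt⟩ : Fin n) with hg
    have h1 : ((A.submatrix f g).submatrix (finSumFinEquiv (n := 1))
        (finSumFinEquiv (n := 1))).det = (A.submatrix f g).det :=
      Matrix.det_submatrix_equiv_self _ _
    rw [← h1]
    have h2 : (A.submatrix f g).submatrix (finSumFinEquiv (n := 1)) (finSumFinEquiv (n := 1)) =
        Matrix.fromBlocks P (M.toBlocks₁₂.submatrix id (fun _ => j))
          (M.toBlocks₂₁.submatrix (fun _ => i) id)
          (Matrix.of fun _ _ => M.toBlocks₂₂ i j) := by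
      ext a b
      have hfl : ∀ k : Fin m, f (Fin.castAdd 1 k) = Fin.castLE hm.le k := by
        intro k
        have hc : Fin.castAdd 1 k = Fin.castSucc k := rfl
        rw [hc, hf, Fin.snoc_castSucc]
      have hfr : ∀ z : Fin 1, f (Fin.natAdd m z) =
          (⟨m + i.val, Nat.add_lt_of_lt_sub' i.isLt⟩ : Fin n) := by
        intro z
        have hc : Fin.natAdd m z = Fin.last m := by
          apply Fin.ext; simp [Fin.val_eq_zero z]
        rw [hc, hf, Fin.snoc_last]
      have hgl : ∀ k : Fin m, g (Fin.castAdd 1 k) = Fin.castLE hm.le k := by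
        intro k
        have hc : Fin.castAdd 1 k = Fin.castSucc k := rfl
        rw [hc, hg, Fin.snoc_castSucc]
      have hgr : ∀ z : Fin 1, g (Fin.natAdd m z) =
          (⟨m + j.val, Nat.add_lt_of_lt_sub' j.isLt⟩ : Fin n) := by
        intro z
        have hc : Fin.natAdd m z = Fin.last m := by
          apply Fin.ext; simp [Fin.val_eq_zero z]
        rw [hc, hg, Fin.snoc_last]
      cases a with
      | inl a =>
        cases b with
        | inl b => simp [hfl, hgl, hPeq]
        | inr b => simp [hfl, hgr, hM, Matrix.toBlocks₁₂, heinl, heinr]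
      | inr a =>
        cases b with
        | inl b => simp [hfr, hgl, hM, Matrix.toBlocks₂₁, heinl, heinr]
        | inr b => simp [hfr, hgr, hM, Matrix.toBlocks₂₂, heinr]
    rw [h2, Matrix.det_fromBlocks₁₁]
    congr 1
    rw [Matrix.det_fin_one]
    simp [hSdef, Matrix.sub_apply, Matrix.mul_apply, Finset.mul_sum, Finset.sum_mul]
  have hBsmul : B = P.det • S := by
    ext i j; simp [hBentry i j]
  have hnm : n - m = (n - m - 1) + 1 := by omega
  rw [hBsmul, Matrix.det_smul, hdetA, Fintype.card_fin, ← hPeq]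
  have hpow : P.det ^ (n - m) = P.det ^ (n - m - 1) * P.det := by
    conv_lhs => rw [hnm]
    rw [pow_succ]
  rw [hpow]; ring


theorem sylvester_identity {R : Type} [CommRing R] {n m : ℕ} (hm : m < n)
    (A : Matrix (Fin n) (Fin n) R)
    (B : Matrix (Fin (n - m)) (Fin (n - m)) R)
    (hB : ∀ i j, B i j =
      (A.submatrix
        (Fin.snoc (fun k : Fin m => Fin.castLE hm.le k)
          (⟨m + i.val, by have := i.isLt; omega⟩ : Fin n))
        (Fin.snoc (fun k : Fin m => Fin.castLE hm.le k)
          (⟨m + j.val, by have := j.isLt; omega⟩ : Fin n))).det) :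
    B.det = A.det * ((A.submatrix (Fin.castLE hm.le) (Fin.castLE hm.le)).det) ^ (n - m - 1) := by
  classical
  set Rp := MvPolynomial (Fin n × Fin n) ℤ with hRp
  set Ap : Matrix (Fin n) (Fin n) Rp := Matrix.of fun i j => MvPolynomial.X (i, j) with hAp
  set Bp : Matrix (Fin (n - m)) (Fin (n - m)) Rp := Matrix.of fun i j =>
      (Ap.submatrix
        (Fin.snoc (fun k : Fin m => Fin.castLE hm.le k)
          (⟨m + i.val, by have := i.isLt; omega⟩ : Fin n))
        (Fin.snoc (fun k : Fin m => Fin.castLE hm.le k)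
          (⟨m + j.val, by have := j.isLt; omega⟩ : Fin n))).det with hBp
  -- Step 1: the generic identity over the polynomial ring
  have hpoly : Bp.det =
      Ap.det * ((Ap.submatrix (Fin.castLE hm.le) (Fin.castLE hm.le)).det) ^ (n - m - 1) := by
    set K := FractionRing Rp with hK
    set ψ : Rp →+* K := algebraMap Rp K with hψ
    have hinj : Function.Injective ψ := IsFractionRing.injective Rp K
    apply hinj
    set AK : Matrix (Fin n) (Fin n) K := Ap.map ψ with hAK
    have hPp : (Ap.submatrix (Fin.castLE hm.le) (Fin.castLE hm.le)).det ≠ 0 := by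
      intro h
      have h1 := congrArg (MvPolynomial.eval
        (fun p : Fin n × Fin n => if p.1 = p.2 then (1 : ℤ) else 0)) h
      rw [map_zero, RingHom.map_det, RingHom.mapMatrix_apply] at h1
      have h2 : (Ap.submatrix (Fin.castLE hm.le) (Fin.castLE hm.le)).map
          (MvPolynomial.eval (fun p : Fin n × Fin n => if p.1 = p.2 then (1 : ℤ) else 0)) =
          (1 : Matrix (Fin m) (Fin m) ℤ) := by
        ext k l
        by_cases hkl : k = l
        · subst hkl; simp [hAp]
        · have : Fin.castLE hm.le k ≠ Fin.castLE hm.le l := by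
            simp [Fin.ext_iff] at hkl ⊢; omega
          simp [hAp, this, Matrix.one_apply, hkl]
      rw [h2, Matrix.det_one] at h1
      exact one_ne_zero h1
    have hPK : (AK.submatrix (Fin.castLE hm.le) (Fin.castLE hm.le)).det ≠ 0 := by
      have : (AK.submatrix (Fin.castLE hm.le) (Fin.castLE hm.le)).det =
          ψ ((Ap.submatrix (Fin.castLE hm.le) (Fin.castLE hm.le)).det) := by
        rw [RingHom.map_det, RingHom.mapMatrix_apply]; rfl
      rw [this]
      intro h
      exact hPp (hinj (by rw [h, map_zero]))
    have key := sylvester_field hm AK hPK (Bp.map ψ) (by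
      intro i j
      show ψ (Bp i j) = _
      rw [hBp]
      show ψ ((Ap.submatrix _ _).det) = _
      rw [RingHom.map_det, RingHom.mapMatrix_apply]
      rfl)
    rw [RingHom.map_det, RingHom.map_mul, RingHom.map_pow, RingHom.map_det, RingHom.map_det,
      RingHom.mapMatrix_apply, RingHom.mapMatrix_apply, RingHom.mapMatrix_apply]
    convert key using 2
    rfl
  -- Step 2: specialize to R via evaluation
  set φ : Rp →+* R := MvPolynomial.eval₂Hom (Int.castRingHom R) (fun p => A p.1 p.2) with hφ
  have hApφ : Ap.map φ = A := by
    ext i j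
    show φ (MvPolynomial.X (i, j)) = A i j
    rw [hφ, MvPolynomial.eval₂Hom_X']
  have hBpφ : Bp.map φ = B := by
    ext i j
    show φ (Bp i j) = B i j
    rw [hBp, hB i j]
    show φ ((Ap.submatrix _ _).det) = _
    rw [RingHom.map_det, RingHom.mapMatrix_apply]
    congr 1
    ext k l
    show φ (Ap _ _) = A _ _
    rw [← hApφ]; rfl
  have h := congrArg φ hpoly
  rw [RingHom.map_mul, RingHom.map_pow, RingHom.map_det, RingHom.map_det, RingHom.map_det,
    RingHom.mapMatrix_apply, RingHom.mapMatrix_apply, RingHom.mapMatrix_apply,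
    hBpφ, hApφ] at h
  have hsub : (Ap.submatrix (Fin.castLE hm.le) (Fin.castLE hm.le)).map ⇑φ =
      A.submatrix (Fin.castLE hm.le) (Fin.castLE hm.le) := by
    ext k l
    show φ (Ap _ _) = A _ _
    rw [← hApφ]; rfl
  rw [hsub] at h
  exact h
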